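/- Fix r ∈ (0,1]. The function g ↦ ((1−2g)r)² − E(4g r²/(1+r⁴))² is strictly decreasing on [0,1/2). (This is the monogamy score M₂ = E_a² − E₁₂² − E₁₃² − E₂₃² of the non-generic GHZ-class state ψ(g₁,0,0,r): here E_a = (1−2g₁)r, E₁₂ = E₁₃ = 0 and E₂₃ = E(4g₁r²/(1+r⁴)).) -/
import Mathlib


/-- Binary Shannon entropy (base 2), with the convention `0 * log₂ 0 = 0`
(automatic since `Real.logb 2 0 = 0`). -/
noncomputable def binEntropy (p : ℝ) : ℝ :=
  -p * Real.logb 2 p - (1 - p) * Real.logb 2 (1 - p)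

/-- Entanglement-of-formation function of the concurrence `C`. -/
noncomputable def eof (C : ℝ) : ℝ :=
  binEntropy ((1 + Real.sqrt (1 - C ^ 2)) / 2)

lemma binEntropy_eq (p : ℝ) : binEntropy p = Real.binEntropy p / Real.log 2 := by
  unfold binEntropy Real.binEntropy
  rw [Real.log_inv, Real.log_inv, Real.logb, Real.logb]
  ring

lemma eof_nonneg {C : ℝ} (h0 : 0 ≤ C) (h1 : C ≤ 1) : 0 ≤ eof C := by
  have hC2 : 0 ≤ 1 - C ^ 2 := by nlinarith
  have hs0 : 0 ≤ Real.sqrt (1 - C ^ 2) := Real.sqrt_nonneg _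
  have hs1 : Real.sqrt (1 - C ^ 2) ≤ 1 := Real.sqrt_le_one.mpr (by nlinarith)
  rw [eof, binEntropy_eq]
  apply div_nonneg _ (Real.log_nonneg (by norm_num))
  exact Real.binEntropy_nonneg (by linarith) (by linarith)

lemma eof_mono {a b : ℝ} (h0 : 0 ≤ a) (hab : a ≤ b) (h1 : b ≤ 1) :
    eof a ≤ eof b := by
  have ha2 : 0 ≤ 1 - a ^ 2 := by nlinarith
  have hb2 : 0 ≤ 1 - b ^ 2 := by nlinarith
  have hsb0 : 0 ≤ Real.sqrt (1 - b ^ 2) := Real.sqrt_nonneg _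
  have hsa1 : Real.sqrt (1 - a ^ 2) ≤ 1 := Real.sqrt_le_one.mpr (by nlinarith)
  have hle : Real.sqrt (1 - b ^ 2) ≤ Real.sqrt (1 - a ^ 2) :=
    Real.sqrt_le_sqrt (by nlinarith)
  rw [eof, eof, binEntropy_eq, binEntropy_eq]
  gcongr
  exact Real.binEntropy_strictAntiOn.antitoneOn
    (by constructor <;> [linarith; linarith])
    (by constructor <;> [linarith; linarith])
    (by linarith)

/-- For fixed `r ∈ (0,1]`, the monogamy score
`g ↦ ((1-2g)r)² - E(4gr²/(1+r⁴))²` of the non-generic GHZ-class state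
`ψ(g,0,0,r)` is strictly decreasing on `[0,1/2)`. -/
theorem accessible_monogamy_score_strictAnti (r : ℝ) (hr : r ∈ Set.Ioc (0 : ℝ) 1) :
    StrictAntiOn
      (fun g : ℝ => ((1 - 2 * g) * r) ^ 2 - (eof (4 * g * r ^ 2 / (1 + r ^ 4))) ^ 2)
      (Set.Ico (0 : ℝ) (1 / 2)) := by
  obtain ⟨hr0, hr1⟩ := hr
  intro a ha b hb hab
  obtain ⟨ha0, ha1⟩ := ha
  obtain ⟨hb0, hb1⟩ := hb
  have hden : (0 : ℝ) < 1 + r ^ 4 := by positivity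
  set Ca := 4 * a * r ^ 2 / (1 + r ^ 4) with hCa
  set Cb := 4 * b * r ^ 2 / (1 + r ^ 4) with hCb
  have hCa0 : 0 ≤ Ca := by positivity
  have hCab : Ca ≤ Cb := by
    rw [hCa, hCb]
    gcongr

  have hCb1 : Cb ≤ 1 := by
    rw [hCb, div_le_one hden]
    nlinarith [sq_nonneg (1 - r ^ 2), sq_nonneg r]
  have hE : eof Ca ≤ eof Cb := eof_mono hCa0 hCab hCb1
  have hE0 : 0 ≤ eof Ca := eof_nonneg hCa0 (hCab.trans hCb1)
  have h1 : ((1 - 2 * b) * r) ^ 2 < ((1 - 2 * a) * r) ^ 2 := by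
    nlinarith [mul_pos (mul_pos (mul_pos (show (0:ℝ) < 4 by norm_num) (mul_pos hr0 hr0))
      (sub_pos.2 hab)) (show (0:ℝ) < 1 - a - b by linarith)]
  simp only
  nlinarith
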